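/- Let d ≥ 1 and let μ_H be the normalized Haar probability measure on the unitary group U(d). Then for any indices i, j ∈ Fin d, the fourth moment of a single matrix entry satisfies ∫ |U_{i j}|⁴ dμ_H(U) = 2/( d (d + 1) ). -/

import Mathlib

open MeasureTheory Matrix

noncomputable instance unitaryGroupMeasurableSpace {n : Type*} [Fintype n] [DecidableEq n] :
    MeasurableSpace (Matrix.unitaryGroup n ℂ) := borel _

instance unitaryGroupBorelSpace {n : Type*} [Fintype n] [DecidableEq n] :
    BorelSpace (Matrix.unitaryGroup n ℂ) := ⟨rfl⟩

section Aux

variable {d : ℕ}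

/-- Permutation matrices are unitary. -/
lemma permMatrix_mem_unitaryGroup (σ : Equiv.Perm (Fin d)) :
    σ.permMatrix ℂ ∈ Matrix.unitaryGroup (Fin d) ℂ := by
  rw [Matrix.mem_unitaryGroup_iff]
  have hstar : star (σ.permMatrix ℂ) = (σ⁻¹).permMatrix ℂ := by
    ext r s
    simp [Matrix.star_apply, Equiv.Perm.permMatrix, PEquiv.toMatrix_apply,
      Equiv.toPEquiv_apply]
    split_ifs with h1 h2 h2 <;> simp_all
    · exact h2 (by simpa using congrArg σ.symm h1.symm)
    · exact h1 (by simpa using congrArg σ h2.symm)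
  rw [hstar, Equiv.Perm.permMatrix, PEquiv.toMatrix_toPEquiv_mul]
  ext r s
  simp [Matrix.submatrix_apply, Equiv.Perm.permMatrix, PEquiv.toMatrix_apply,
    Equiv.toPEquiv_apply, Matrix.one_apply, Equiv.eq_symm_apply]

/-- The permutation matrix as an element of the unitary group. -/
noncomputable def permU (σ : Equiv.Perm (Fin d)) : Matrix.unitaryGroup (Fin d) ℂ :=
  ⟨σ.permMatrix ℂ, permMatrix_mem_unitaryGroup σ⟩

lemma permU_mul_apply (σ : Equiv.Perm (Fin d)) (U : Matrix.unitaryGroup (Fin d) ℂ)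
    (r s : Fin d) :
    ((permU σ * U : Matrix.unitaryGroup (Fin d) ℂ) : Matrix (Fin d) (Fin d) ℂ) r s
      = (U : Matrix (Fin d) (Fin d) ℂ) (σ r) s := by
  show ((σ.permMatrix ℂ) * (U : Matrix (Fin d) (Fin d) ℂ)) r s = _
  rw [Equiv.Perm.permMatrix, PEquiv.toMatrix_toPEquiv_mul]
  rfl

lemma sum_pair_support {p q : Fin d} (hpq : p ≠ q) (f : Fin d → ℂ)
    (hf : ∀ t, t ≠ p → t ≠ q → f t = 0) : ∑ t, f t = f p + f q := by
  rw [← Finset.sum_pair hpq]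
  refine (Finset.sum_subset (Finset.subset_univ _) ?_).symm
  intro t _ ht
  simp only [Finset.mem_insert, Finset.mem_singleton] at ht
  push_neg at ht
  exact hf t ht.1 ht.2

/-- A unitary rotation mixing two rows. -/
noncomputable def mixMat (ω : ℂ) (p q : Fin d) : Matrix (Fin d) (Fin d) ℂ :=
  fun r s =>
    if r = p then
      (if s = p then (Real.sqrt 2 : ℂ)⁻¹
        else if s = q then -(starRingEnd ℂ ω) * (Real.sqrt 2 : ℂ)⁻¹ else 0)
    else if r = q then
      (if s = p then ω * (Real.sqrt 2 : ℂ)⁻¹ else if s = q then (Real.sqrt 2 : ℂ)⁻¹ else 0)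
    else if r = s then 1 else 0

lemma sqrt2_mul_self : ((Real.sqrt 2 : ℝ) : ℂ) * ((Real.sqrt 2 : ℝ) : ℂ) = 2 := by
  rw [← Complex.ofReal_mul, Real.mul_self_sqrt (by norm_num)]
  norm_num

lemma conj_sqrt2_inv : (starRingEnd ℂ) ((Real.sqrt 2 : ℂ)⁻¹) = (Real.sqrt 2 : ℂ)⁻¹ := by
  rw [map_inv₀, Complex.conj_ofReal]

lemma mixMat_mem (ω : ℂ) (hω : ω * (starRingEnd ℂ) ω = 1) {p q : Fin d}
    (hpq : p ≠ q) : mixMat ω p q ∈ Matrix.unitaryGroup (Fin d) ℂ := by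
  have hsum : ∀ (f : Fin d → ℂ), (∀ t, t ≠ p → t ≠ q → f t = 0) → ∑ t, f t = f p + f q :=
    fun f hf => sum_pair_support hpq f hf
  have h2 := sqrt2_mul_self
  have hsq : ((Real.sqrt 2 : ℝ) : ℂ) ^ 2 = 2 := by rw [sq]; exact h2
  rw [Matrix.mem_unitaryGroup_iff]
  ext r s
  rw [Matrix.mul_apply]
  simp only [Matrix.star_apply]
  by_cases hr : r = p ∨ r = q
  · by_cases hs : s = p ∨ s = q
    · rw [hsum _ ?_]
      · rcases hr with h | h <;> rcases hs with h' | h' <;> subst h <;> subst h' <;>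
          simp [mixMat, hpq, hpq.symm, Matrix.one_apply, conj_sqrt2_inv, _root_.map_mul,
            mul_comm, mul_assoc, mul_left_comm] <;>
          field_simp <;>
          first
            | linear_combination (2 : ℂ) * hω
            | linear_combination hω + hsq
            | linear_combination hω + h2
            | linear_combination hω - h2
            | linear_combination hω - hsq
            | linear_combination (2 : ℂ) * hω + hsq
            | linear_combination hω
            | ring1
      · intro t htp htq
        rcases hs with h' | h' <;> subst h' <;>
          rcases hr with h | h <;> subst h <;>
          simp [mixMat, htp, htq, hpq, hpq.symm]
    · push_neg at hs
      rw [Finset.sum_eq_single s]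
      · rcases hr with h | h <;> subst h <;>
          simp [mixMat, hs.1, hs.2, Matrix.one_apply, Ne.symm hs.1, Ne.symm hs.2]
      · intro t _ hts
        have : (mixMat ω p q) s t = 0 := by simp [mixMat, hs.1, hs.2, Ne.symm hts]
        rw [this]; simp
      · intro h; exact absurd (Finset.mem_univ s) h
  · push_neg at hr
    rw [Finset.sum_eq_single r]
    · have : (mixMat ω p q) r r = 1 := by simp [mixMat, hr.1, hr.2]
      rw [this, one_mul]
      by_cases hsr : s = r
      · subst hsr; simp [mixMat, hr.1, hr.2, Matrix.one_apply]
      · rcases (by tauto : s = p ∨ s = q ∨ (s ≠ p ∧ s ≠ q)) with h | h | h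
        · subst h; simp [mixMat, hr.1, hr.2, Ne.symm hsr, Matrix.one_apply, hsr]
        · subst h; simp [mixMat, hr.1, hr.2, Ne.symm hsr, Matrix.one_apply, hsr, hpq.symm]
        · simp [mixMat, h.1, h.2, hsr, Ne.symm hsr, Matrix.one_apply]
    · intro t _ htr
      have : (mixMat ω p q) r t = 0 := by simp [mixMat, hr.1, hr.2, Ne.symm htr]
      rw [this]; simp
    · intro h; exact absurd (Finset.mem_univ r) h

/-- The mixing unitary as a group element. -/
noncomputable def mixU (ω : ℂ) (hω : ω * (starRingEnd ℂ) ω = 1) {p q : Fin d} (hpq : p ≠ q) :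
    Matrix.unitaryGroup (Fin d) ℂ :=
  ⟨mixMat ω p q, mixMat_mem ω hω hpq⟩

lemma mixU_mul_apply (ω : ℂ) (hω : ω * (starRingEnd ℂ) ω = 1) {p q : Fin d} (hpq : p ≠ q)
    (U : Matrix.unitaryGroup (Fin d) ℂ) (s : Fin d) :
    ((mixU ω hω hpq * U : Matrix.unitaryGroup (Fin d) ℂ) : Matrix (Fin d) (Fin d) ℂ) p s
      = (Real.sqrt 2 : ℂ)⁻¹ * ((U : Matrix (Fin d) (Fin d) ℂ) p s
          + (-(starRingEnd ℂ ω)) * (U : Matrix (Fin d) (Fin d) ℂ) q s) := by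
  show ((mixMat ω p q) * (U : Matrix (Fin d) (Fin d) ℂ)) p s = _
  rw [Matrix.mul_apply]
  rw [sum_pair_support hpq _ (fun t htp htq => by simp [mixMat, htp, htq, hpq])]
  simp [mixMat, hpq, hpq.symm]
  ring

/-- Columns of a unitary matrix have norm one. -/
lemma col_sum_one (U : Matrix.unitaryGroup (Fin d) ℂ) (j : Fin d) :
    ∑ i, ‖(U : Matrix (Fin d) (Fin d) ℂ) i j‖ ^ 2 = 1 := by
  have hentry : (star (U : Matrix (Fin d) (Fin d) ℂ) * (U : Matrix (Fin d) (Fin d) ℂ)) j j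
      = (1 : Matrix (Fin d) (Fin d) ℂ) j j := by rw [U.2.1]
  rw [Matrix.mul_apply, Matrix.one_apply_eq] at hentry
  have key : ∀ t, (star (U : Matrix (Fin d) (Fin d) ℂ)) j t * (U : Matrix (Fin d) (Fin d) ℂ) t j
      = ((‖(U : Matrix (Fin d) (Fin d) ℂ) t j‖ ^ 2 : ℝ) : ℂ) := by
    intro t
    rw [Matrix.star_apply, Complex.star_def, ← Complex.normSq_eq_norm_sq,
      Complex.normSq_eq_conj_mul_self]
    try push_cast
    try ring
  rw [Finset.sum_congr rfl (fun t _ => key t), ← Complex.ofReal_sum] at hentry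
  exact_mod_cast hentry

lemma entry_abs_le_one (U : Matrix.unitaryGroup (Fin d) ℂ) (i j : Fin d) :
    ‖(U : Matrix (Fin d) (Fin d) ℂ) i j‖ ≤ 1 := by
  have h := col_sum_one U j
  have hle : ‖(U : Matrix (Fin d) (Fin d) ℂ) i j‖ ^ 2 ≤ 1 := by
    rw [← h]
    exact Finset.single_le_sum
      (f := fun t => ‖(U : Matrix (Fin d) (Fin d) ℂ) t j‖ ^ 2)
      (fun t _ => sq_nonneg _) (Finset.mem_univ i)
  nlinarith [norm_nonneg ((U : Matrix (Fin d) (Fin d) ℂ) i j)]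

lemma quartic_identity (a b : ℂ) :
    ‖a + 1 * b‖ ^ 4 + ‖a + (-1) * b‖ ^ 4
      + ‖a + Complex.I * b‖ ^ 4 + ‖a + (-Complex.I) * b‖ ^ 4
    = 4 * ‖a‖ ^ 4 + 4 * ‖b‖ ^ 4
      + 16 * (‖a‖ ^ 2 * ‖b‖ ^ 2) := by
  have h4 : ∀ z : ℂ, ‖z‖ ^ 4 = Complex.normSq z ^ 2 := by
    intro z
    rw [show (4 : ℕ) = 2 * 2 from rfl, pow_mul, Complex.sq_norm]
  have h2 : ∀ z : ℂ, ‖z‖ ^ 2 = Complex.normSq z := Complex.sq_norm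
  simp only [h4, h2, Complex.normSq_apply, Complex.add_re, Complex.add_im, Complex.sub_re,
    Complex.sub_im, Complex.mul_re, Complex.mul_im, Complex.I_re, Complex.I_im,
    Complex.neg_re, Complex.neg_im, Complex.one_re, Complex.one_im]
  ring

lemma integrable_of_bdd (μH : Measure (Matrix.unitaryGroup (Fin d) ℂ))
    [IsProbabilityMeasure μH] (f : Matrix.unitaryGroup (Fin d) ℂ → ℝ) (C : ℝ)
    (hc : Continuous f) (hb : ∀ x, ‖f x‖ ≤ C) : Integrable f μH :=
  (integrable_const C).mono' hc.aestronglyMeasurable (ae_of_all _ hb)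

lemma continuous_entry (i j : Fin d) :
    Continuous fun U : Matrix.unitaryGroup (Fin d) ℂ => (U : Matrix (Fin d) (Fin d) ℂ) i j :=
  continuous_subtype_val.matrix_elem i j

end Aux

/-- **Fourth moment of a single Haar-unitary matrix entry.** For `d ≥ 1` and any
indices `i, j`, `∫ |U_{i j}|⁴ dμ_H(U) = 2/(d(d+1))`. -/
theorem fourth_moment_haar_unitary_single_entry
    (d : ℕ) (hd : 1 ≤ d)
    (μH : Measure (Matrix.unitaryGroup (Fin d) ℂ))
    [μH.IsHaarMeasure] [IsProbabilityMeasure μH]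
    (i j : Fin d) :
    ∫ U : Matrix.unitaryGroup (Fin d) ℂ,
        ‖(U : Matrix (Fin d) (Fin d) ℂ) i j‖ ^ 4 ∂μH
      = 2 / ((d : ℝ) * ((d : ℝ) + 1)) := by
  rcases eq_or_lt_of_le hd with h1 | h2
  · -- d = 1
    have hd1 : d = 1 := h1.symm
    subst hd1
    have hconst : ∀ U : Matrix.unitaryGroup (Fin 1) ℂ,
        ‖(U : Matrix (Fin 1) (Fin 1) ℂ) i j‖ ^ 4 = 1 := by
      intro U
      have h := col_sum_one U j
      rw [Fin.sum_univ_one] at h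
      have hij : i = 0 := Subsingleton.elim _ _
      rw [hij]
      have h2 : ‖(U : Matrix (Fin 1) (Fin 1) ℂ) 0 j‖ ^ 2 = 1 := h
      nlinarith
    simp_rw [hconst]
    rw [integral_const]
    simp
    norm_num
  · -- d ≥ 2
    have hd2 : 2 ≤ d := h2
    set G := Matrix.unitaryGroup (Fin d) ℂ
    let z0 : Fin d := ⟨0, by omega⟩
    let z1 : Fin d := ⟨1, by omega⟩
    have hz01 : z0 ≠ z1 := by simp [z0, z1, Fin.ext_iff]
    set M4 : ℝ := ∫ U : G, ‖(U : Matrix (Fin d) (Fin d) ℂ) z0 j‖ ^ 4 ∂μH with hM4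
    set M22 : ℝ := ∫ U : G, ‖(U : Matrix (Fin d) (Fin d) ℂ) z0 j‖ ^ 2
        * ‖(U : Matrix (Fin d) (Fin d) ℂ) z1 j‖ ^ 2 ∂μH with hM22
    -- integrability facts
    have int4 : ∀ p : Fin d,
        Integrable (fun U : G => ‖(U : Matrix (Fin d) (Fin d) ℂ) p j‖ ^ 4) μH := by
      intro p
      refine integrable_of_bdd μH _ 1
        ((continuous_norm.comp (continuous_entry p j)).pow 4) (fun U => ?_)
      rw [Real.norm_eq_abs, abs_of_nonneg (by positivity)]
      calc ‖(U : Matrix (Fin d) (Fin d) ℂ) p j‖ ^ 4 ≤ 1 ^ 4 :=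
            pow_le_pow_left₀ (norm_nonneg _) (entry_abs_le_one U p j) 4
        _ = 1 := one_pow 4
    have int22 : ∀ p q : Fin d,
        Integrable (fun U : G => ‖(U : Matrix (Fin d) (Fin d) ℂ) p j‖ ^ 2
          * ‖(U : Matrix (Fin d) (Fin d) ℂ) q j‖ ^ 2) μH := by
      intro p q
      refine integrable_of_bdd μH _ 1
        (((continuous_norm.comp (continuous_entry p j)).pow 2).mul
          ((continuous_norm.comp (continuous_entry q j)).pow 2)) (fun U => ?_)
      rw [Real.norm_eq_abs, abs_of_nonneg (by positivity)]
      have hp : ‖(U : Matrix (Fin d) (Fin d) ℂ) p j‖ ^ 2 ≤ 1 := by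
        calc ‖(U : Matrix (Fin d) (Fin d) ℂ) p j‖ ^ 2 ≤ 1 ^ 2 :=
              pow_le_pow_left₀ (norm_nonneg _) (entry_abs_le_one U p j) 2
          _ = 1 := one_pow 2
      have hq : ‖(U : Matrix (Fin d) (Fin d) ℂ) q j‖ ^ 2 ≤ 1 := by
        calc ‖(U : Matrix (Fin d) (Fin d) ℂ) q j‖ ^ 2 ≤ 1 ^ 2 :=
              pow_le_pow_left₀ (norm_nonneg _) (entry_abs_le_one U q j) 2
          _ = 1 := one_pow 2
      nlinarith [sq_nonneg (‖(U : Matrix (Fin d) (Fin d) ℂ) p j‖),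
        sq_nonneg (‖(U : Matrix (Fin d) (Fin d) ℂ) q j‖)]
    have intMix : ∀ η : ℂ, ‖η‖ = 1 →
        Integrable (fun U : G => ‖(U : Matrix (Fin d) (Fin d) ℂ) z0 j
          + η * (U : Matrix (Fin d) (Fin d) ℂ) z1 j‖ ^ 4) μH := by
      intro η hη
      refine integrable_of_bdd μH _ 16
        ((continuous_norm.comp
          ((continuous_entry z0 j).add (continuous_const.mul (continuous_entry z1 j)))).pow 4)
        (fun U => ?_)
      rw [Real.norm_eq_abs, abs_of_nonneg (by positivity)]
      have hb : ‖(U : Matrix (Fin d) (Fin d) ℂ) z0 j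
          + η * (U : Matrix (Fin d) (Fin d) ℂ) z1 j‖ ≤ 2 := by
        calc ‖(U : Matrix (Fin d) (Fin d) ℂ) z0 j
              + η * (U : Matrix (Fin d) (Fin d) ℂ) z1 j‖
            ≤ ‖(U : Matrix (Fin d) (Fin d) ℂ) z0 j‖
              + ‖η * (U : Matrix (Fin d) (Fin d) ℂ) z1 j‖ := norm_add_le _ _
          _ = ‖(U : Matrix (Fin d) (Fin d) ℂ) z0 j‖
              + ‖η‖ * ‖(U : Matrix (Fin d) (Fin d) ℂ) z1 j‖ := by
              rw [norm_mul]
          _ ≤ 1 + 1 * 1 := by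
              rw [hη]
              have h1 := entry_abs_le_one U z0 j
              have h2 := entry_abs_le_one U z1 j
              linarith
          _ = 2 := by norm_num
      calc ‖(U : Matrix (Fin d) (Fin d) ℂ) z0 j
            + η * (U : Matrix (Fin d) (Fin d) ℂ) z1 j‖ ^ 4 ≤ 2 ^ 4 :=
            pow_le_pow_left₀ (norm_nonneg _) hb 4
        _ = 16 := by norm_num
    -- row-permutation invariance
    have perm_inv4 : ∀ p : Fin d,
        (∫ U : G, ‖(U : Matrix (Fin d) (Fin d) ℂ) p j‖ ^ 4 ∂μH) = M4 := by
      intro p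
      have h := integral_mul_left_eq_self (μ := μH)
        (fun U : G => ‖(U : Matrix (Fin d) (Fin d) ℂ) z0 j‖ ^ 4)
        (permU (Equiv.swap z0 p))
      rw [hM4, ← h]
      refine integral_congr_ae (ae_of_all _ (fun U => ?_))
      simp only [permU_mul_apply, Equiv.swap_apply_left]
    have perm_inv22 : ∀ p q : Fin d, p ≠ q →
        (∫ U : G, ‖(U : Matrix (Fin d) (Fin d) ℂ) p j‖ ^ 2
          * ‖(U : Matrix (Fin d) (Fin d) ℂ) q j‖ ^ 2 ∂μH) = M22 := by
      intro p q hpq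
      let τ : Equiv.Perm (Fin d) := Equiv.swap z0 p
      let q' : Fin d := τ q
      have hq' : q' ≠ z0 := by
        simp only [q', τ, Ne]
        rw [Equiv.swap_apply_eq_iff, Equiv.swap_apply_left]
        exact Ne.symm hpq
      let σ : Equiv.Perm (Fin d) := (Equiv.swap z1 q').trans τ
      have hσ0 : σ z0 = p := by
        simp only [σ, Equiv.trans_apply]
        rw [Equiv.swap_apply_of_ne_of_ne hz01 hq'.symm]
        simp [τ]
      have hσ1 : σ z1 = q := by
        simp only [σ, Equiv.trans_apply, Equiv.swap_apply_left, q', τ,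
          Equiv.swap_apply_self]
      have h := integral_mul_left_eq_self (μ := μH)
        (fun U : G => ‖(U : Matrix (Fin d) (Fin d) ℂ) z0 j‖ ^ 2
          * ‖(U : Matrix (Fin d) (Fin d) ℂ) z1 j‖ ^ 2) (permU σ)
      rw [hM22, ← h]
      refine integral_congr_ae (ae_of_all _ (fun U => ?_))
      simp only [permU_mul_apply, hσ0, hσ1]
    -- mixing invariance: for |η| = 1, ∫ |a + η b|⁴ = 4 M4
    have mix_inv : ∀ η : ℂ, η * (starRingEnd ℂ) η = 1 →
        (∫ U : G, ‖(U : Matrix (Fin d) (Fin d) ℂ) z0 j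
          + η * (U : Matrix (Fin d) (Fin d) ℂ) z1 j‖ ^ 4 ∂μH) = 4 * M4 := by
      intro η hη
      set ω : ℂ := -(starRingEnd ℂ) η with hωdef
      have hω : ω * (starRingEnd ℂ) ω = 1 := by
        simp only [hωdef, map_neg, Complex.conj_conj, neg_mul, mul_neg, neg_neg]
        rw [mul_comm]; exact hη
      have hback : -(starRingEnd ℂ) ω = η := by
        simp [hωdef, Complex.conj_conj]
      have key : ∀ U : G,
          ‖(((mixU ω hω hz01) * U : G) : Matrix (Fin d) (Fin d) ℂ) z0 j‖ ^ 4
            = (4 : ℝ)⁻¹ * ‖(U : Matrix (Fin d) (Fin d) ℂ) z0 j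
                + η * (U : Matrix (Fin d) (Fin d) ℂ) z1 j‖ ^ 4 := by
        intro U
        rw [mixU_mul_apply ω hω hz01 U j, hback]
        rw [norm_mul, mul_pow]
        have habs : ‖(Real.sqrt 2 : ℂ)⁻¹‖ = (Real.sqrt 2)⁻¹ := by
          rw [norm_inv, Complex.norm_real, Real.norm_eq_abs, abs_of_nonneg (Real.sqrt_nonneg 2)]
        have hpow : Real.sqrt 2 ^ 4 = 4 := by
          rw [show (4 : ℕ) = 2 * 2 from rfl, pow_mul, Real.sq_sqrt (by norm_num : (0:ℝ) ≤ 2)]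
          norm_num
        rw [habs, inv_pow, hpow]
      have hpt : ∀ U : G,
          ‖(U : Matrix (Fin d) (Fin d) ℂ) z0 j
            + η * (U : Matrix (Fin d) (Fin d) ℂ) z1 j‖ ^ 4
          = 4 * 
              ‖(((mixU ω hω hz01) * U : G) : Matrix (Fin d) (Fin d) ℂ) z0 j‖ ^ 4 := by
        intro U
        rw [key U]
        ring
      calc (∫ U : G, ‖(U : Matrix (Fin d) (Fin d) ℂ) z0 j
              + η * (U : Matrix (Fin d) (Fin d) ℂ) z1 j‖ ^ 4 ∂μH)
          = ∫ U : G, 4 * 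
              ‖(((mixU ω hω hz01) * U : G) : Matrix (Fin d) (Fin d) ℂ) z0 j‖ ^ 4 ∂μH :=
            integral_congr_ae (ae_of_all _ hpt)
        _ = 4 * ∫ U : G, 
              ‖(((mixU ω hω hz01) * U : G) : Matrix (Fin d) (Fin d) ℂ) z0 j‖ ^ 4 ∂μH :=
            integral_const_mul 4 _
        _ = 4 * M4 := by
            rw [hM4]
            congr 1
            exact integral_mul_left_eq_self (μ := μH)
              (fun U : G => ‖(U : Matrix (Fin d) (Fin d) ℂ) z0 j‖ ^ 4)
              (mixU ω hω hz01)
    -- the four mixing equations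
    have e1 := mix_inv 1 (by norm_num)
    have e2 := mix_inv (-1) (by simp)
    have e3 := mix_inv Complex.I (by simp [Complex.conj_I, Complex.I_mul_I])
    have e4 := mix_inv (-Complex.I) (by simp [Complex.conj_I, Complex.I_mul_I])
    have i1 := intMix 1 (by simp)
    have i2 := intMix (-1) (by simp)
    have i3 := intMix Complex.I Complex.norm_I
    have i4 := intMix (-Complex.I) (by simp)
    have i12 : Integrable (fun U : G =>
        ‖(U : Matrix (Fin d) (Fin d) ℂ) z0 j
          + 1 * (U : Matrix (Fin d) (Fin d) ℂ) z1 j‖ ^ 4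
        + ‖(U : Matrix (Fin d) (Fin d) ℂ) z0 j
          + (-1) * (U : Matrix (Fin d) (Fin d) ℂ) z1 j‖ ^ 4) μH := i1.add i2
    have i123 : Integrable (fun U : G =>
        ‖(U : Matrix (Fin d) (Fin d) ℂ) z0 j
          + 1 * (U : Matrix (Fin d) (Fin d) ℂ) z1 j‖ ^ 4
        + ‖(U : Matrix (Fin d) (Fin d) ℂ) z0 j
          + (-1) * (U : Matrix (Fin d) (Fin d) ℂ) z1 j‖ ^ 4
        + ‖(U : Matrix (Fin d) (Fin d) ℂ) z0 j
          + Complex.I * (U : Matrix (Fin d) (Fin d) ℂ) z1 j‖ ^ 4) μH := i12.add i3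
    have hLHS : (∫ U : G,
        (‖(U : Matrix (Fin d) (Fin d) ℂ) z0 j
            + 1 * (U : Matrix (Fin d) (Fin d) ℂ) z1 j‖ ^ 4
          + ‖(U : Matrix (Fin d) (Fin d) ℂ) z0 j
            + (-1) * (U : Matrix (Fin d) (Fin d) ℂ) z1 j‖ ^ 4
          + ‖(U : Matrix (Fin d) (Fin d) ℂ) z0 j
            + Complex.I * (U : Matrix (Fin d) (Fin d) ℂ) z1 j‖ ^ 4
          + ‖(U : Matrix (Fin d) (Fin d) ℂ) z0 j
            + (-Complex.I) * (U : Matrix (Fin d) (Fin d) ℂ) z1 j‖ ^ 4) ∂μH) = 16 * M4 := by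
      rw [integral_add i123 i4, integral_add i12 i3, integral_add i1 i2, e1, e2, e3, e4]
      ring
    have i5 : Integrable (fun U : G =>
        4 * ‖(U : Matrix (Fin d) (Fin d) ℂ) z0 j‖ ^ 4) μH := (int4 z0).const_mul 4
    have i6 : Integrable (fun U : G =>
        4 * ‖(U : Matrix (Fin d) (Fin d) ℂ) z1 j‖ ^ 4) μH := (int4 z1).const_mul 4
    have i7 : Integrable (fun U : G =>
        16 * (‖(U : Matrix (Fin d) (Fin d) ℂ) z0 j‖ ^ 2
          * ‖(U : Matrix (Fin d) (Fin d) ℂ) z1 j‖ ^ 2)) μH :=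
      (int22 z0 z1).const_mul 16
    have i56 : Integrable (fun U : G =>
        4 * ‖(U : Matrix (Fin d) (Fin d) ℂ) z0 j‖ ^ 4
        + 4 * ‖(U : Matrix (Fin d) (Fin d) ℂ) z1 j‖ ^ 4) μH := i5.add i6
    have hRHS : (∫ U : G,
        (4 * ‖(U : Matrix (Fin d) (Fin d) ℂ) z0 j‖ ^ 4
          + 4 * ‖(U : Matrix (Fin d) (Fin d) ℂ) z1 j‖ ^ 4
          + 16 * (‖(U : Matrix (Fin d) (Fin d) ℂ) z0 j‖ ^ 2
            * ‖(U : Matrix (Fin d) (Fin d) ℂ) z1 j‖ ^ 2)) ∂μH)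
        = 4 * M4 + 4 * M4 + 16 * M22 := by
      rw [integral_add i56 i7, integral_add i5 i6, integral_const_mul, integral_const_mul,
        integral_const_mul, perm_inv4 z0, perm_inv4 z1, ← hM22]
    have hM4eq : M4 = 2 * M22 := by
      have hid : (∫ U : G,
          (‖(U : Matrix (Fin d) (Fin d) ℂ) z0 j
              + 1 * (U : Matrix (Fin d) (Fin d) ℂ) z1 j‖ ^ 4
            + ‖(U : Matrix (Fin d) (Fin d) ℂ) z0 j
              + (-1) * (U : Matrix (Fin d) (Fin d) ℂ) z1 j‖ ^ 4
            + ‖(U : Matrix (Fin d) (Fin d) ℂ) z0 j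
              + Complex.I * (U : Matrix (Fin d) (Fin d) ℂ) z1 j‖ ^ 4
            + ‖(U : Matrix (Fin d) (Fin d) ℂ) z0 j
              + (-Complex.I) * (U : Matrix (Fin d) (Fin d) ℂ) z1 j‖ ^ 4) ∂μH)
          = ∫ U : G,
          (4 * ‖(U : Matrix (Fin d) (Fin d) ℂ) z0 j‖ ^ 4
            + 4 * ‖(U : Matrix (Fin d) (Fin d) ℂ) z1 j‖ ^ 4
            + 16 * (‖(U : Matrix (Fin d) (Fin d) ℂ) z0 j‖ ^ 2
              * ‖(U : Matrix (Fin d) (Fin d) ℂ) z1 j‖ ^ 2)) ∂μH :=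
        integral_congr_ae (ae_of_all _ (fun U => quartic_identity
          ((U : Matrix (Fin d) (Fin d) ℂ) z0 j) ((U : Matrix (Fin d) (Fin d) ℂ) z1 j)))
      rw [hLHS, hRHS] at hid
      linarith
    -- expansion of 1 over the column
    have hone : (∫ U : G,
        ((∑ r : Fin d, ‖(U : Matrix (Fin d) (Fin d) ℂ) r j‖ ^ 2) ^ 2) ∂μH) = 1 := by
      have hpt : ∀ U : G,
          ((∑ r : Fin d, ‖(U : Matrix (Fin d) (Fin d) ℂ) r j‖ ^ 2) ^ 2) = 1 := by
        intro U
        rw [col_sum_one U j]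
        norm_num
      rw [integral_congr_ae (ae_of_all _ hpt), integral_const]
      simp
    have hexp : (∫ U : G,
        ((∑ r : Fin d, ‖(U : Matrix (Fin d) (Fin d) ℂ) r j‖ ^ 2) ^ 2) ∂μH)
        = ∑ r1 : Fin d, ∑ r2 : Fin d,
            ∫ U : G, ‖(U : Matrix (Fin d) (Fin d) ℂ) r1 j‖ ^ 2
              * ‖(U : Matrix (Fin d) (Fin d) ℂ) r2 j‖ ^ 2 ∂μH := by
      calc (∫ U : G,
          ((∑ r : Fin d, ‖(U : Matrix (Fin d) (Fin d) ℂ) r j‖ ^ 2) ^ 2) ∂μH)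
          = ∫ U : G, (∑ r1 : Fin d, ∑ r2 : Fin d,
              ‖(U : Matrix (Fin d) (Fin d) ℂ) r1 j‖ ^ 2
              * ‖(U : Matrix (Fin d) (Fin d) ℂ) r2 j‖ ^ 2) ∂μH := by
            refine integral_congr_ae (ae_of_all _ (fun U => ?_))
            simp only [pow_two, Finset.sum_mul_sum]
        _ = ∑ r1 : Fin d, ∫ U : G, (∑ r2 : Fin d,
              ‖(U : Matrix (Fin d) (Fin d) ℂ) r1 j‖ ^ 2
              * ‖(U : Matrix (Fin d) (Fin d) ℂ) r2 j‖ ^ 2) ∂μH :=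
            integral_finset_sum _
              (fun r1 _ => integrable_finset_sum _ (fun r2 _ => int22 r1 r2))
        _ = ∑ r1 : Fin d, ∑ r2 : Fin d,
              ∫ U : G, ‖(U : Matrix (Fin d) (Fin d) ℂ) r1 j‖ ^ 2
                * ‖(U : Matrix (Fin d) (Fin d) ℂ) r2 j‖ ^ 2 ∂μH :=
            Finset.sum_congr rfl
              (fun r1 _ => integral_finset_sum _ (fun r2 _ => int22 r1 r2))
    have hval : ∀ r1 r2 : Fin d,
        (∫ U : G, ‖(U : Matrix (Fin d) (Fin d) ℂ) r1 j‖ ^ 2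
          * ‖(U : Matrix (Fin d) (Fin d) ℂ) r2 j‖ ^ 2 ∂μH)
          = if r1 = r2 then M4 else M22 := by
      intro r1 r2
      by_cases h : r1 = r2
      · subst h
        rw [if_pos rfl, ← perm_inv4 r1]
        refine integral_congr_ae (ae_of_all _ (fun U => ?_))
        ring
      · rw [if_neg h]
        exact perm_inv22 r1 r2 h
    have count : (∑ r1 : Fin d, ∑ r2 : Fin d, (if r1 = r2 then M4 else M22))
        = (d : ℝ) * M4 + (d : ℝ) * ((d : ℝ) - 1) * M22 := by
      have inner : ∀ r1 : Fin d, (∑ r2 : Fin d, (if r1 = r2 then M4 else M22))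
          = M4 + ((d : ℝ) - 1) * M22 := by
        intro r1
        have step : ∀ r2 : Fin d, (if r1 = r2 then M4 else M22)
            = (if r1 = r2 then M4 - M22 else 0) + M22 := by
          intro r2; split_ifs <;> ring
        rw [Finset.sum_congr rfl (fun r2 _ => step r2), Finset.sum_add_distrib,
          Finset.sum_ite_eq, if_pos (Finset.mem_univ r1), Finset.sum_const,
          Finset.card_univ, Fintype.card_fin, nsmul_eq_mul]
        ring
      rw [Finset.sum_congr rfl (fun r1 _ => inner r1), Finset.sum_const,
        Finset.card_univ, Fintype.card_fin, nsmul_eq_mul]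
      ring
    have hbal : (1 : ℝ) = (d : ℝ) * M4 + (d : ℝ) * ((d : ℝ) - 1) * M22 := by
      rw [← count, ← Finset.sum_congr rfl (fun r1 _ => Finset.sum_congr rfl
        (fun r2 _ => hval r1 r2)), ← hexp, hone]
    have hgoal : (∫ U : G, ‖(U : Matrix (Fin d) (Fin d) ℂ) i j‖ ^ 4 ∂μH) = M4 :=
      perm_inv4 i
    rw [hgoal]
    have hdpos : (0 : ℝ) < (d : ℝ) * ((d : ℝ) + 1) := by
      have h2d : (2 : ℝ) ≤ (d : ℝ) := by exact_mod_cast hd2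
      nlinarith
    rw [eq_div_iff (ne_of_gt hdpos)]
    linear_combination (-2 : ℝ) * hbal + ((d : ℝ) * ((d : ℝ) - 1)) * hM4eq
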